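/- arXiv:1504.02151 — 5 statements merged into one kernel-verified Lean document; each statement's English description precedes it below -/
import Mathlib

section
/- Let G be a finite simple graph containing a fan F on distinct vertices w, u_1, …, u_r (r ≥ 2) with cutset edges j = (u_0, u_1), k = (x, w), l = (u_r, u_{r+1}). Then every Hamiltonian cycle τ of G that contains both k and l contains, among the edges with both endpoints in {w, u_1, …, u_r}, exactly the edges (w, u_1), (u_1, u_2), …, (u_{r−1}, u_r); that is, τ traverses F by the subsequence w, u_1, u_2, …, u_r (a left-traversal). -/
open SimpleGraph Walk

private lemma aux_nbr_empty {V : Type*} {G : SimpleGraph V} {a b z : V} (q : G.Walk a b)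
    (h : z ∉ q.support) : q.toSubgraph.neighborSet z = ∅ := by
  ext y
  simp only [Set.mem_empty_iff_false, iff_false, SimpleGraph.Subgraph.mem_neighborSet]
  intro hadj
  exact h (by simpa [Walk.verts_toSubgraph] using q.toSubgraph.edge_vert hadj)

private lemma aux_path_start {V : Type*} {G : SimpleGraph V} {a b : V} (q : G.Walk a b)
    (hq : q.IsPath) (hn : ¬ q.Nil) :
    ∃ c, s(a, c) ∈ q.edges ∧ q.toSubgraph.neighborSet a = {c} := by
  cases q with
  | nil => simp at hn
  | @cons _ v _ h p =>
    refine ⟨v, by simp, ?_⟩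
    have hp : a ∉ p.support := by
      have := hq.support_nodup
      simp only [Walk.support_cons, List.nodup_cons] at this
      exact this.1
    rw [Walk.toSubgraph, SimpleGraph.Subgraph.neighborSet_sup, aux_nbr_empty p hp,
      SimpleGraph.neighborSet_fst_subgraphOfAdj]
    simp

private lemma aux_cycle_start {V : Type*} {G : SimpleGraph V} {v : V} (c : G.Walk v v)
    (hc : c.IsCycle) : ∃ a b, a ≠ b ∧ c.toSubgraph.neighborSet v = {a, b} := by
  cases c with
  | nil => exact absurd rfl hc.ne_nil
  | @cons _ v' _ h p =>
    rw [Walk.cons_isCycle_iff] at hc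
    have hnil : ¬ p.Nil := by
      intro hnil
      exact h.ne (by simp [hnil.eq])
    obtain ⟨b, hbe, hbs⟩ := aux_path_start p.reverse hc.1.reverse
      (by rw [Walk.nil_reverse]; exact hnil)
    refine ⟨v', b, ?_, ?_⟩
    · rintro rfl
      exact hc.2 (by simpa [Sym2.eq_swap] using hbe)
    · rw [Walk.toSubgraph, SimpleGraph.Subgraph.neighborSet_sup,
        SimpleGraph.neighborSet_fst_subgraphOfAdj, ← Walk.toSubgraph_reverse, hbs]
      ext y; simp [or_comm]

private lemma aux_two_nbrs {V : Type*} [DecidableEq V] {G : SimpleGraph V} {v₀ z : V}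
    (τ : G.Walk v₀ v₀) (hτ : τ.IsCycle) (hz : z ∈ τ.support) :
    ∃ a b, a ≠ b ∧ ∀ y, (τ.toSubgraph.Adj z y ↔ y = a ∨ y = b) := by
  obtain ⟨a, b, hab, hset⟩ := aux_cycle_start (τ.rotate z hz) (hτ.rotate hz)
  rw [Walk.toSubgraph_rotate] at hset
  refine ⟨a, b, hab, fun y => ?_⟩
  rw [← SimpleGraph.Subgraph.mem_neighborSet, hset]
  simp

/-- Left-traversal of a fan.  Let `G` contain a fan on distinct vertices
`w, u 1, …, u r` (`r ≥ 2`): the edges of `G` inside `F = {w, u 1, …, u r}` are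
exactly the spokes `(w, u i)` (`1 ≤ i ≤ r`) and the rim edges `(u i, u (i+1))`
(`1 ≤ i ≤ r-1`), and the only edges leaving `F` are `j = (u 0, u 1)`, `k = (x, w)`
and `l = (u r, u (r+1))` with `u 0, x, u (r+1) ∉ F`.  Then every Hamiltonian cycle
`τ` containing `k` and `l` contains, among the edges with both endpoints in `F`,
exactly the edges `(w, u 1), (u 1, u 2), …, (u (r-1), u r)`. -/
theorem stmt_7 {V : Type*} [Fintype V] [DecidableEq V] (G : SimpleGraph V)
    (r : ℕ) (hr : 2 ≤ r) (w x : V) (u : ℕ → V) (F : Set V)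
    (hF : F = insert w (u '' Set.Icc 1 r))
    (hinj : ∀ i ∈ Set.Icc 1 r, ∀ j ∈ Set.Icc 1 r, u i = u j → i = j)
    (hwu : ∀ i ∈ Set.Icc 1 r, u i ≠ w)
    (hu0 : u 0 ∉ F) (hx : x ∉ F) (hur1 : u (r + 1) ∉ F)
    (hin : ∀ a ∈ F, ∀ b ∈ F, (G.Adj a b ↔
      (∃ i ∈ Set.Icc 1 r, (a = w ∧ b = u i) ∨ (a = u i ∧ b = w)) ∨
      (∃ i ∈ Set.Icc 1 (r - 1), (a = u i ∧ b = u (i + 1)) ∨ (a = u (i + 1) ∧ b = u i))))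
    (hout : ∀ a ∈ F, ∀ b ∉ F, (G.Adj a b ↔
      (a = u 1 ∧ b = u 0) ∨ (a = w ∧ b = x) ∨ (a = u r ∧ b = u (r + 1))))
    {v₀ : V} (τ : G.Walk v₀ v₀) (hτ : τ.IsHamiltonianCycle)
    (hk : s(x, w) ∈ τ.edges) (hl : s(u r, u (r + 1)) ∈ τ.edges) :
    ∀ e : Sym2 V, (e ∈ τ.edges ∧ ∀ z ∈ e, z ∈ F) ↔
      (e = s(w, u 1) ∨ ∃ i ∈ Set.Icc 1 (r - 1), e = s(u i, u (i + 1))) := by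
  -- basic membership facts
  have hmemF : ∀ i, 1 ≤ i → i ≤ r → u i ∈ F := fun i h1 h2 => by
    rw [hF]; exact Set.mem_insert_iff.2 (Or.inr ⟨i, ⟨h1, h2⟩, rfl⟩)
  have hwF : w ∈ F := by rw [hF]; exact Set.mem_insert _ _
  have huw : ∀ i, 1 ≤ i → i ≤ r → u i ≠ w := fun i h1 h2 => hwu i ⟨h1, h2⟩
  have huinj : ∀ i j, 1 ≤ i → i ≤ r → 1 ≤ j → j ≤ r → u i = u j → i = j :=
    fun i j a b c d h => hinj i ⟨a, b⟩ j ⟨c, d⟩ h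
  have hune : ∀ i j, 1 ≤ i → i ≤ r → 1 ≤ j → j ≤ r → i ≠ j → u i ≠ u j :=
    fun i j a b c d hne h => hne (huinj i j a b c d h)
  have hFne : ∀ y, y ∈ F → y ≠ x ∧ y ≠ u 0 ∧ y ≠ u (r + 1) := fun y hy =>
    ⟨fun h => hx (h ▸ hy), fun h => hu0 (h ▸ hy), fun h => hur1 (h ▸ hy)⟩
  -- adjacency machinery
  have hA : ∀ p q : V, (s(p, q) ∈ τ.edges ↔ τ.toSubgraph.Adj p q) := fun p q => by
    rw [← Walk.mem_edges_toSubgraph, SimpleGraph.Subgraph.mem_edgeSet]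
  have h2 : ∀ z, ∃ a b, a ≠ b ∧ ∀ y, (τ.toSubgraph.Adj z y ↔ y = a ∨ y = b) :=
    fun z => aux_two_nbrs τ hτ.isCycle (hτ.mem_support z)
  have hGA : ∀ {p q : V}, τ.toSubgraph.Adj p q → G.Adj p q := fun h => τ.toSubgraph.adj_sub h
  have sing : ∀ z c, (∀ y, τ.toSubgraph.Adj z y → y = c) → False := by
    intro z c hall
    obtain ⟨p, q, hpq, hiff⟩ := h2 z
    exact hpq (((hall p ((hiff p).2 (Or.inl rfl)))).trans
      (hall q ((hiff q).2 (Or.inr rfl))).symm)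
  have three : ∀ z y₁ y₂ y₃, y₁ ≠ y₂ → y₁ ≠ y₃ → y₂ ≠ y₃ →
      τ.toSubgraph.Adj z y₁ → τ.toSubgraph.Adj z y₂ → τ.toSubgraph.Adj z y₃ → False := by
    intro z y₁ y₂ y₃ h12 h13 h23 a1 a2 a3
    obtain ⟨p, q, hpq, hiff⟩ := h2 z
    rcases (hiff y₁).1 a1 with rfl | rfl <;> rcases (hiff y₂).1 a2 with h | h <;>
      rcases (hiff y₃).1 a3 with h' | h' <;>
      first
        | exact h12 h.symm
        | exact h13 h'.symm
        | exact h23 (h.trans h'.symm)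
  have pair : ∀ z c d, c ≠ d → (∀ y, τ.toSubgraph.Adj z y → y = c ∨ y = d) →
      τ.toSubgraph.Adj z c → τ.toSubgraph.Adj z d := by
    intro z c d hcd hsub hc
    obtain ⟨p, q, hpq, hiff⟩ := h2 z
    rcases hsub p ((hiff p).2 (Or.inl rfl)) with h | h
    · rcases hsub q ((hiff q).2 (Or.inr rfl)) with h' | h'
      · exact absurd (h.trans h'.symm) hpq
      · exact (hiff d).2 (Or.inr h'.symm)
    · exact (hiff d).2 (Or.inl h.symm)
  -- G-neighborhood analysis
  have Gw : ∀ y, G.Adj w y → y = x ∨ ∃ i, 1 ≤ i ∧ i ≤ r ∧ y = u i := by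
    intro y hy
    by_cases hyF : y ∈ F
    · right
      rcases (hin w hwF y hyF).1 hy with ⟨i, hi, h | h⟩ | ⟨i, hi, h | h⟩
      · exact ⟨i, hi.1, hi.2, h.2⟩
      · exact absurd h.1.symm (huw i hi.1 hi.2)
      · rw [Set.mem_Icc] at hi; exact absurd h.1.symm (huw i hi.1 (by omega))
      · rw [Set.mem_Icc] at hi; exact absurd h.1.symm (huw (i+1) (by omega) (by omega))
    · left
      rcases (hout w hwF y hyF).1 hy with h | h | h
      · exact absurd h.1.symm (huw 1 le_rfl (by omega))
      · exact h.2
      · exact absurd h.1.symm (huw r (by omega) le_rfl)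
  have Gu : ∀ t y, 1 ≤ t → t ≤ r → G.Adj (u t) y →
      y = w ∨ (∃ s, 1 ≤ s ∧ s + 1 ≤ r ∧ ((t = s ∧ y = u (s + 1)) ∨ (t = s + 1 ∧ y = u s)))
      ∨ (t = 1 ∧ y = u 0) ∨ (t = r ∧ y = u (r + 1)) := by
    intro t y h1 h2' hy
    by_cases hyF : y ∈ F
    · rcases (hin (u t) (hmemF t h1 h2') y hyF).1 hy with ⟨i, hi, h | h⟩ | ⟨i, hi, h | h⟩
      · exact absurd h.1 (huw t h1 h2')
      · exact Or.inl h.2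
      · rw [Set.mem_Icc] at hi
        refine Or.inr (Or.inl ⟨i, hi.1, by omega, Or.inl ⟨?_, h.2⟩⟩)
        exact huinj t i h1 h2' hi.1 (by omega) h.1
      · rw [Set.mem_Icc] at hi
        refine Or.inr (Or.inl ⟨i, hi.1, by omega, Or.inr ⟨?_, h.2⟩⟩)
        exact huinj t (i+1) h1 h2' (by omega) (by omega) h.1
    · rcases (hout (u t) (hmemF t h1 h2') y hyF).1 hy with h | h | h
      · exact Or.inr (Or.inr (Or.inl ⟨huinj t 1 h1 h2' le_rfl (by omega) h.1, h.2⟩))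
      · exact absurd h.1 (huw t h1 h2')
      · exact Or.inr (Or.inr (Or.inr ⟨huinj t r h1 h2' (by omega) le_rfl h.1, h.2⟩))
  -- cycle edges at w
  have hAwx : τ.toSubgraph.Adj w x := ((hA x w).1 hk).symm
  have hAr : τ.toSubgraph.Adj (u r) (u (r + 1)) := (hA _ _).1 hl
  obtain ⟨a, ha1, har, hNw⟩ :
      ∃ a, 1 ≤ a ∧ a ≤ r ∧ ∀ y, (τ.toSubgraph.Adj w y ↔ y = x ∨ y = u a) := by
    obtain ⟨p, q, hpq, hiff⟩ := h2 w
    rcases (hiff x).1 hAwx with rfl | rfl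
    · rcases Gw q (hGA ((hiff q).2 (Or.inr rfl))) with rfl | ⟨i, hi1, hi2, rfl⟩
      · exact absurd rfl hpq
      · exact ⟨i, hi1, hi2, hiff⟩
    · rcases Gw p (hGA ((hiff p).2 (Or.inl rfl))) with rfl | ⟨i, hi1, hi2, rfl⟩
      · exact absurd rfl hpq
      · exact ⟨i, hi1, hi2, fun y => (hiff y).trans or_comm⟩
  have notAw : ∀ t, 1 ≤ t → t ≤ r → t ≠ a → ¬ τ.toSubgraph.Adj (u t) w := by
    intro t h1 h2' hne hadj
    rcases (hNw (u t)).1 hadj.symm with h | h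
    · exact (hFne (u t) (hmemF t h1 h2')).1 h
    · exact hne (huinj t a h1 h2' ha1 har h)
  -- singleton contradiction at a vertex cut off on both sides
  have singAt : ∀ t, 2 ≤ t → t ≤ r → ¬ τ.toSubgraph.Adj (u t) w →
      (∀ s, s + 1 = t → ¬ τ.toSubgraph.Adj (u t) (u s)) → False := by
    intro t h2t htr hnw hnprev
    by_cases htr' : t = r
    · refine sing (u t) (u (r + 1)) ?_
      intro y hy
      rcases Gu t y (by omega) htr (hGA hy) with hw' | ⟨s, hs1, hs2, ⟨hts, hy'⟩ | ⟨hts, hy'⟩⟩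
        | ⟨ht1, _⟩ | ⟨_, hy'⟩
      · exact absurd (hw' ▸ hy) hnw
      · omega
      · exact absurd (hy' ▸ hy) (hnprev s hts.symm)
      · omega
      · exact hy'
    · refine sing (u t) (u (t + 1)) ?_
      intro y hy
      rcases Gu t y (by omega) htr (hGA hy) with hw' | ⟨s, hs1, hs2, ⟨hts, hy'⟩ | ⟨hts, hy'⟩⟩
        | ⟨ht1, _⟩ | ⟨ht1, hy'⟩
      · exact absurd (hw' ▸ hy) hnw
      · rw [hy', ← hts]
      · exact absurd (hy' ▸ hy) (hnprev s hts.symm)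
      · omega
      · omega
  -- the ascending chain below a
  have chainLow : ∀ t, 1 ≤ t → t < a → τ.toSubgraph.Adj (u t) (u (t + 1)) := by
    have base : 1 < a → τ.toSubgraph.Adj (u 1) (u 2) := by
      intro h1a
      obtain ⟨p, q, hpq, hiff⟩ := h2 (u 1)
      have hsub : ∀ y, τ.toSubgraph.Adj (u 1) y → y = u 0 ∨ y = u 2 := by
        intro y hy
        rcases Gu 1 y le_rfl (by omega) (hGA hy) with hw' | ⟨s, hs1, hs2, ⟨hts, hy'⟩ | ⟨hts, hy'⟩⟩
          | ⟨_, hy'⟩ | ⟨h1r, _⟩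
        · exact absurd (hw' ▸ hy) (notAw 1 le_rfl (by omega) (by omega))
        · right; rw [hy', ← hts]
        · omega
        · left; exact hy'
        · omega
      rcases hsub p ((hiff p).2 (Or.inl rfl)) with rfl | rfl
      · rcases hsub q ((hiff q).2 (Or.inr rfl)) with rfl | rfl
        · exact absurd rfl hpq
        · exact (hiff (u 2)).2 (Or.inr rfl)
      · exact (hiff (u 2)).2 (Or.inl rfl)
    intro t
    induction t with
    | zero => omega
    | succ n ih =>
      intro _ hlt
      by_cases hn : n = 0
      · subst hn; exact base hlt
      · have hprev := ih (by omega) (by omega)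
        refine pair (u (n + 1)) (u n) (u (n + 2))
          (hune n (n + 2) (by omega) (by omega) (by omega) (by omega) (by omega)) ?_ hprev.symm
        intro y hy
        rcases Gu (n + 1) y (by omega) (by omega) (hGA hy) with hw'
          | ⟨s, hs1, hs2, ⟨hts, hy'⟩ | ⟨hts, hy'⟩⟩ | ⟨ht1, _⟩ | ⟨htr', _⟩
        · exact absurd (hw' ▸ hy) (notAw (n + 1) (by omega) (by omega) (by omega))
        · right; rw [hy']; congr 1; omega
        · left; rw [hy']; congr 1; omega
        · omega
        · omega
  have ha : a = 1 := by
    by_contra hne1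
    obtain ⟨s, rfl⟩ : ∃ s, a = s + 1 := ⟨a - 1, by omega⟩
    have hs1 : 1 ≤ s := by omega
    have hAaw : τ.toSubgraph.Adj (u (s + 1)) w := ((hNw (u (s + 1))).2 (Or.inr rfl)).symm
    have hAs : τ.toSubgraph.Adj (u (s + 1)) (u s) := (chainLow s hs1 (by omega)).symm
    by_cases hsr : s + 1 = r
    · refine three (u (s + 1)) w (u s) (u (r + 1)) ?_ ?_ ?_ hAaw hAs ?_
      · exact (huw s hs1 (by omega)).symm
      · exact fun h => hur1 (h ▸ hwF)
      · exact fun h => hur1 (h ▸ hmemF s hs1 (by omega))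
      · rw [hsr]; exact hAr
    · have hnot : ¬ τ.toSubgraph.Adj (u (s + 1)) (u (s + 2)) := by
        intro hadj
        refine three (u (s + 1)) w (u s) (u (s + 2)) ?_ ?_ ?_ hAaw hAs hadj
        · exact (huw s hs1 (by omega)).symm
        · exact (huw (s + 2) (by omega) (by omega)).symm
        · exact hune s (s + 2) hs1 (by omega) (by omega) (by omega) (by omega)
      refine singAt (s + 2) (by omega) (by omega)
        (notAw (s + 2) (by omega) (by omega) (by omega)) ?_
      intro s' hs'
      have hseq : s' = s + 1 := by omega
      rw [hseq]
      exact fun h => hnot h.symm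
  subst ha
  have hAw1 : τ.toSubgraph.Adj w (u 1) := (hNw (u 1)).2 (Or.inr rfl)
  have hA12 : τ.toSubgraph.Adj (u 1) (u 2) := by
    by_contra hnot
    refine singAt 2 le_rfl hr (notAw 2 (by omega) hr (by omega)) ?_
    intro s' hs'
    have hseq : s' = 1 := by omega
    rw [hseq]
    exact fun h => hnot h.symm
  have chain2 : ∀ t, 1 ≤ t → t + 1 ≤ r → τ.toSubgraph.Adj (u t) (u (t + 1)) := by
    intro t
    induction t with
    | zero => omega
    | succ n ih =>
      intro _ hle
      by_cases hn : n = 0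
      · subst hn; exact hA12
      · have hprev := ih (by omega) (by omega)
        refine pair (u (n + 1)) (u n) (u (n + 2))
          (hune n (n + 2) (by omega) (by omega) (by omega) (by omega) (by omega)) ?_ hprev.symm
        intro y hy
        rcases Gu (n + 1) y (by omega) (by omega) (hGA hy) with hw'
          | ⟨s, hs1, hs2, ⟨hts, hy'⟩ | ⟨hts, hy'⟩⟩ | ⟨ht1, _⟩ | ⟨htr', _⟩
        · exact absurd (hw' ▸ hy) (notAw (n + 1) (by omega) (by omega) (by omega))
        · right; rw [hy']; congr 1; omega
        · left; rw [hy']; congr 1; omega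
        · omega
        · omega
  intro e
  induction e using Sym2.ind with
  | _ p q =>
    constructor
    · rintro ⟨he, hzF⟩
      have hp : p ∈ F := hzF p (Sym2.mem_mk_left p q)
      have hq : q ∈ F := hzF q (Sym2.mem_mk_right p q)
      have hApq : τ.toSubgraph.Adj p q := (hA p q).1 he
      have hpF := hp
      rw [hF, Set.mem_insert_iff] at hpF
      rcases hpF with rfl | ⟨t, ht, rfl⟩
      · rcases (hNw q).1 hApq with h | h
        · exact absurd h (hFne q hq).1
        · left; rw [h]
      · rw [Set.mem_Icc] at ht
        rcases Gu t q ht.1 ht.2 (hGA hApq) with hw' | ⟨s, hs1, hs2, ⟨hts, hy'⟩ | ⟨hts, hy'⟩⟩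
          | ⟨ht1, hy'⟩ | ⟨htr', hy'⟩
        · have ht1 : t = 1 := by
            by_contra hne
            exact notAw t ht.1 ht.2 hne (hw' ▸ hApq)
          left; rw [hw', ht1, Sym2.eq_swap]
        · right; exact ⟨s, Set.mem_Icc.2 ⟨hs1, by omega⟩, by rw [hts, hy']⟩
        · right; exact ⟨s, Set.mem_Icc.2 ⟨hs1, by omega⟩, by rw [hts, hy', Sym2.eq_swap]⟩
        · exact absurd hy' (hFne q hq).2.1
        · exact absurd hy' (hFne q hq).2.2
    · rintro (he | ⟨i, hi, he⟩)
      · refine ⟨by rw [he]; exact (hA w (u 1)).2 hAw1, ?_⟩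
        intro z hz
        rw [he] at hz
        rcases Sym2.mem_iff.1 hz with rfl | rfl
        · exact hwF
        · exact hmemF 1 le_rfl (by omega)
      · rw [Set.mem_Icc] at hi
        refine ⟨by rw [he]; exact (hA _ _).2 (chain2 i hi.1 (by omega)), ?_⟩
        intro z hz
        rw [he] at hz
        rcases Sym2.mem_iff.1 hz with rfl | rfl
        · exact hmemF i hi.1 (by omega)
        · exact hmemF (i + 1) (by omega) (by omega)
end

section
/- Let G be a finite simple graph containing a fan F on distinct vertices w, u_1, …, u_r (r ≥ 2) with cutset edges j = (u_0, u_1), k = (x, w), l = (u_r, u_{r+1}). Then every Hamiltonian cycle τ of G that contains both j and k contains, among the edges with both endpoints in {w, u_1, …, u_r}, exactly the edges (u_1, u_2), …, (u_{r−1}, u_r), (u_r, w); that is, τ traverses F by the subsequence u_1, u_2, …, u_r, w (a right-traversal). -/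
open SimpleGraph Walk

lemma path_start_unique {V : Type*} {G : SimpleGraph V} {v w : V} {p : G.Walk v w}
    (hp : p.IsPath) {a b : V} (ha : s(v, a) ∈ p.edges) (hb : s(v, b) ∈ p.edges) : a = b := by
  cases p with
  | nil => simp at ha
  | @cons _ m _ h q =>
    rw [SimpleGraph.Walk.cons_isPath_iff] at hp
    have key : ∀ z, s(v, z) ∈ (SimpleGraph.Walk.cons h q).edges → z = m := by
      intro z hz
      rw [SimpleGraph.Walk.edges_cons, List.mem_cons] at hz
      rcases hz with hz | hz
      · exact Sym2.congr_right.mp hz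
      · exact absurd (SimpleGraph.Walk.fst_mem_support_of_mem_edges q hz) hp.2
    rw [key a ha, key b hb]

lemma cycle_edges_at {V : Type*} [DecidableEq V] {G : SimpleGraph V} {v₀ : V}
    {c : G.Walk v₀ v₀} (hc : c.IsCycle) (v : V) (hv : v ∈ c.support) :
    ∃ a b : V, a ≠ b ∧ s(v, a) ∈ c.edges ∧ s(v, b) ∈ c.edges ∧
      ∀ z : V, s(v, z) ∈ c.edges → z = a ∨ z = b := by
  have hmem : ∀ e : Sym2 V, e ∈ (c.rotate v hv).edges ↔ e ∈ c.edges :=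
    fun e => (c.rotate_edges v hv).mem_iff
  set c' := c.rotate v hv with hc'def
  have hc' : c'.IsCycle := hc.rotate hv
  have hnn : ¬ c'.Nil := hc'.not_nil
  have hdec := c'.cons_tail_eq hnn
  set q := c'.tail with hq
  have hcyc2 : (SimpleGraph.Walk.cons (c'.adj_snd hnn) q).IsCycle := by
    rw [hdec]; exact hc'
  rw [SimpleGraph.Walk.cons_isCycle_iff] at hcyc2
  obtain ⟨hqpath, hbe⟩ := hcyc2
  have hlen : 3 ≤ c'.length := hc'.three_le_length
  have hqlen : q.length + 1 = c'.length := SimpleGraph.Walk.length_tail_add_one hnn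
  have hqnn : ¬ q.Nil := by
    rw [SimpleGraph.Walk.nil_iff_length_eq]; omega
  have hrnn : ¬ q.reverse.Nil := by
    rw [SimpleGraph.Walk.nil_iff_length_eq, SimpleGraph.Walk.length_reverse]
    rw [SimpleGraph.Walk.nil_iff_length_eq] at hqnn; omega
  have hredges : q.reverse.edges = s(v, q.reverse.getVert 1) :: q.reverse.tail.edges := by
    conv_lhs => rw [← q.reverse.cons_tail_eq hrnn]
    rw [SimpleGraph.Walk.edges_cons]
  have hra : s(v, q.reverse.getVert 1) ∈ q.reverse.edges := by
    rw [hredges]; exact List.mem_cons_self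
  have haq : s(v, q.reverse.getVert 1) ∈ q.edges := by
    rwa [SimpleGraph.Walk.edges_reverse, List.mem_reverse] at hra
  have hedges : c'.edges = s(v, c'.getVert 1) :: q.edges := by
    conv_lhs => rw [← hdec]
    rw [SimpleGraph.Walk.edges_cons]
  refine ⟨q.reverse.getVert 1, c'.getVert 1, ?_, ?_, ?_, ?_⟩
  · intro h; rw [h] at haq; exact hbe haq
  · rw [← hmem, hedges]
    exact List.mem_cons_of_mem _ haq
  · rw [← hmem, hedges]
    exact List.mem_cons_self
  · intro z hz
    rw [← hmem, hedges, List.mem_cons] at hz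
    rcases hz with hz | hz
    · exact Or.inr (Sym2.congr_right.mp hz)
    · refine Or.inl (path_start_unique hqpath.reverse ?_ hra)
      rwa [SimpleGraph.Walk.edges_reverse, List.mem_reverse]

/-- Right-traversal of a fan.  Let `G` contain a fan on distinct vertices
`w, u 1, …, u r` (`r ≥ 2`): the edges of `G` inside `F = {w, u 1, …, u r}` are
exactly the spokes `(w, u i)` (`1 ≤ i ≤ r`) and the rim edges `(u i, u (i+1))`
(`1 ≤ i ≤ r-1`), and the only edges leaving `F` are `j = (u 0, u 1)`, `k = (x, w)`
and `l = (u r, u (r+1))` with `u 0, x, u (r+1) ∉ F`.  Then every Hamiltonian cycle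
`τ` containing `j` and `k` contains, among the edges with both endpoints in `F`,
exactly the edges `(u 1, u 2), …, (u (r-1), u r), (u r, w)`. -/
theorem stmt_8 {V : Type*} [Fintype V] [DecidableEq V] (G : SimpleGraph V)
    (r : ℕ) (hr : 2 ≤ r) (w x : V) (u : ℕ → V) (F : Set V)
    (hF : F = insert w (u '' Set.Icc 1 r))
    (hinj : ∀ i ∈ Set.Icc 1 r, ∀ j ∈ Set.Icc 1 r, u i = u j → i = j)
    (hwu : ∀ i ∈ Set.Icc 1 r, u i ≠ w)
    (hu0 : u 0 ∉ F) (hx : x ∉ F) (hur1 : u (r + 1) ∉ F)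
    (hin : ∀ a ∈ F, ∀ b ∈ F, (G.Adj a b ↔
      (∃ i ∈ Set.Icc 1 r, (a = w ∧ b = u i) ∨ (a = u i ∧ b = w)) ∨
      (∃ i ∈ Set.Icc 1 (r - 1), (a = u i ∧ b = u (i + 1)) ∨ (a = u (i + 1) ∧ b = u i))))
    (hout : ∀ a ∈ F, ∀ b ∉ F, (G.Adj a b ↔
      (a = u 1 ∧ b = u 0) ∨ (a = w ∧ b = x) ∨ (a = u r ∧ b = u (r + 1))))
    {v₀ : V} (τ : G.Walk v₀ v₀) (hτ : τ.IsHamiltonianCycle)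
    (hj : s(u 0, u 1) ∈ τ.edges) (hk : s(x, w) ∈ τ.edges) :
    ∀ e : Sym2 V, (e ∈ τ.edges ∧ ∀ z ∈ e, z ∈ F) ↔
      (e = s(u r, w) ∨ ∃ i ∈ Set.Icc 1 (r - 1), e = s(u i, u (i + 1))) := by
  classical
  -- basic membership facts
  have wF : w ∈ F := hF ▸ Set.mem_insert _ _
  have uF : ∀ i, 1 ≤ i → i ≤ r → u i ∈ F := by
    intro i h1 h2
    rw [hF]
    exact Set.mem_insert_iff.mpr (Or.inr ⟨i, ⟨h1, h2⟩, rfl⟩)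
  -- distinctness helpers
  have hne' : ∀ p q : ℕ, 1 ≤ p → p ≤ r → q ≤ r + 1 → p ≠ q → u p ≠ u q := by
    intro p q hp1 hp2 hq hpq h
    by_cases h1 : 1 ≤ q ∧ q ≤ r
    · exact hpq (hinj p ⟨hp1, hp2⟩ q ⟨h1.1, h1.2⟩ h)
    · have hout' : u q ∉ F := by
        rcases (by omega : q = 0 ∨ q = r + 1) with rfl | rfl
        exacts [hu0, hur1]
      exact hout' (h ▸ uF p hp1 hp2)
  have hnw : ∀ q : ℕ, q ≤ r + 1 → u q ≠ w := by
    intro q hq h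
    by_cases h1 : 1 ≤ q ∧ q ≤ r
    · exact hwu q ⟨h1.1, h1.2⟩ h
    · have hout' : u q ∉ F := by
        rcases (by omega : q = 0 ∨ q = r + 1) with rfl | rfl
        exacts [hu0, hur1]
      exact hout' (h ▸ wF)
  have xne : ∀ m, 1 ≤ m → m ≤ r → x ≠ u m := by
    intro m h1 h2 h
    exact hx (h ▸ uF m h1 h2)
  -- edges give adjacency
  have adjE : ∀ a b : V, s(a, b) ∈ τ.edges → G.Adj a b := by
    intro a b h
    exact (SimpleGraph.mem_edgeSet G).mp (τ.edges_subset_edgeSet h)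
  -- degree-two structure of the Hamiltonian cycle
  have deg : ∀ v : V, ∃ a b : V, a ≠ b ∧ s(v, a) ∈ τ.edges ∧ s(v, b) ∈ τ.edges ∧
      ∀ z : V, s(v, z) ∈ τ.edges → z = a ∨ z = b :=
    fun v => cycle_edges_at hτ.isCycle v (hτ.mem_support v)
  have atmost : ∀ v z₁ z₂ z₃ : V, s(v, z₁) ∈ τ.edges → s(v, z₂) ∈ τ.edges →
      s(v, z₃) ∈ τ.edges → z₁ ≠ z₂ → z₁ ≠ z₃ → z₂ ≠ z₃ → False := by
    intro v z₁ z₂ z₃ h1 h2 h3 h12 h13 h23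
    obtain ⟨a, b, hab, -, -, huniq⟩ := deg v
    rcases huniq z₁ h1 with rfl | rfl <;> rcases huniq z₂ h2 with rfl | rfl <;>
      rcases huniq z₃ h3 with rfl | rfl <;>
      first | exact h12 rfl | exact h13 rfl | exact h23 rfl
  have second : ∀ v z : V, s(v, z) ∈ τ.edges → ∃ z', z' ≠ z ∧ s(v, z') ∈ τ.edges := by
    intro v z h
    obtain ⟨a, b, hab, ha, hb, huniq⟩ := deg v
    rcases huniq z h with rfl | rfl
    · exact ⟨b, hab.symm, hb⟩
    · exact ⟨a, hab, ha⟩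
  -- adjacency characterizations
  have adj_u : ∀ i, 1 ≤ i → i ≤ r → ∀ z : V, G.Adj (u i) z →
      z = w ∨ (i + 1 ≤ r ∧ z = u (i + 1)) ∨ (2 ≤ i ∧ z = u (i - 1)) ∨
      (i = 1 ∧ z = u 0) ∨ (i = r ∧ z = u (r + 1)) := by
    intro i h1 h2 z hadj
    by_cases hz : z ∈ F
    · rw [hin (u i) (uF i h1 h2) z hz] at hadj
      rcases hadj with ⟨m, hm, hc⟩ | ⟨m, hm, hc⟩
      · rw [Set.mem_Icc] at hm
        rcases hc with ⟨he, rfl⟩ | ⟨he, rfl⟩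
        · exact absurd he (hwu i ⟨h1, h2⟩)
        · exact Or.inl rfl
      · rw [Set.mem_Icc] at hm
        rcases hc with ⟨he, rfl⟩ | ⟨he, rfl⟩
        · have him : i = m := hinj i ⟨h1, h2⟩ m ⟨hm.1, by omega⟩ he
          subst him
          exact Or.inr (Or.inl ⟨by omega, rfl⟩)
        · have him : i = m + 1 := hinj i ⟨h1, h2⟩ (m + 1) ⟨by omega, by omega⟩ he
          exact Or.inr (Or.inr (Or.inl ⟨by omega, congrArg u (by omega)⟩))
    · rw [hout (u i) (uF i h1 h2) z hz] at hadj
      rcases hadj with ⟨he, rfl⟩ | ⟨he, -⟩ | ⟨he, rfl⟩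
      · have him : i = 1 := hinj i ⟨h1, h2⟩ 1 ⟨le_refl 1, by omega⟩ he
        exact Or.inr (Or.inr (Or.inr (Or.inl ⟨him, rfl⟩)))
      · exact absurd he (hwu i ⟨h1, h2⟩)
      · have him : i = r := hinj i ⟨h1, h2⟩ r ⟨by omega, le_refl r⟩ he
        exact Or.inr (Or.inr (Or.inr (Or.inr ⟨him, rfl⟩)))
  have adj_w : ∀ z : V, G.Adj w z → z = x ∨ ∃ m, 1 ≤ m ∧ m ≤ r ∧ z = u m := by
    intro z hadj
    by_cases hz : z ∈ F
    · rw [hin w wF z hz] at hadj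
      rcases hadj with ⟨m, hm, hc⟩ | ⟨m, hm, hc⟩
      · rw [Set.mem_Icc] at hm
        rcases hc with ⟨-, rfl⟩ | ⟨he, -⟩
        · exact Or.inr ⟨m, hm.1, hm.2, rfl⟩
        · exact absurd he.symm (hwu m ⟨hm.1, hm.2⟩)
      · rw [Set.mem_Icc] at hm
        rcases hc with ⟨he, -⟩ | ⟨he, -⟩
        · exact absurd he.symm (hwu m ⟨hm.1, by omega⟩)
        · exact absurd he.symm (hwu (m + 1) ⟨by omega, by omega⟩)
    · rw [hout w wF z hz] at hadj
      rcases hadj with ⟨he, -⟩ | ⟨-, rfl⟩ | ⟨he, -⟩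
      · exact absurd he.symm (hwu 1 ⟨le_refl 1, by omega⟩)
      · exact Or.inl rfl
      · exact absurd he.symm (hwu r ⟨by omega, le_refl r⟩)
  have hkw : s(w, x) ∈ τ.edges := by rwa [Sym2.eq_swap] at hk
  -- the starvation step
  have starve : ∀ i, 1 ≤ i → i + 1 ≤ r → s(u (i - 1), u i) ∈ τ.edges →
      s(u i, u (i + 1)) ∈ τ.edges := by
    intro i h1 h2 hprev
    have hprev' : s(u i, u (i - 1)) ∈ τ.edges := by rwa [Sym2.eq_swap] at hprev
    obtain ⟨z, hzne, hz⟩ := second (u i) (u (i - 1)) hprev'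
    have hcand := adj_u i h1 (by omega) z (adjE _ _ hz)
    have hz2 : z = w ∨ z = u (i + 1) := by
      rcases hcand with rfl | ⟨-, rfl⟩ | ⟨-, rfl⟩ | ⟨hi1, rfl⟩ | ⟨hir, -⟩
      · exact Or.inl rfl
      · exact Or.inr rfl
      · exact absurd rfl hzne
      · exact absurd (congrArg u (by omega : (0 : ℕ) = i - 1)) hzne
      · omega
    rcases hz2 with hzw | rfl
    · exfalso
      rw [hzw] at hz
      have hwi : s(w, u i) ∈ τ.edges := by rwa [Sym2.eq_swap] at hz
      obtain ⟨a, b, hab, ha, hb, -⟩ := deg (u (i + 1))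
      have force : ∀ y, s(u (i + 1), y) ∈ τ.edges → y = u (i + 2) := by
        intro y hy
        have hcand2 := adj_u (i + 1) (by omega) h2 y (adjE _ _ hy)
        rcases hcand2 with hyw | ⟨-, rfl⟩ | ⟨-, hy'⟩ | ⟨h1', -⟩ | ⟨hir, rfl⟩
        · exfalso
          rw [hyw] at hy
          have hw3 : s(w, u (i + 1)) ∈ τ.edges := by rwa [Sym2.eq_swap] at hy
          exact atmost w x (u i) (u (i + 1)) hkw hwi hw3
            (xne i h1 (by omega)) (xne (i + 1) (by omega) h2)
            (hne' i (i + 1) h1 (by omega) (by omega) (by omega))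
        · rfl
        · exfalso
          simp only [Nat.add_sub_cancel] at hy'
          subst hy'
          have hnext : s(u i, u (i + 1)) ∈ τ.edges := by rwa [Sym2.eq_swap] at hy
          exact atmost (u i) (u (i - 1)) w (u (i + 1)) hprev' hz hnext
            (hnw (i - 1) (by omega))
            ((hne' (i + 1) (i - 1) (by omega) h2 (by omega) (by omega)).symm)
            ((hnw (i + 1) (by omega)).symm)
        · omega
        · exact congrArg u (by omega)
      exact hab ((force a ha).trans (force b hb).symm)
    · exact hz
  -- the chain of rim edges
  have key : ∀ i, 1 ≤ i → i ≤ r → s(u (i - 1), u i) ∈ τ.edges := by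
    intro i
    induction i with
    | zero => intro h; omega
    | succ n ih =>
      intro h1 h2
      by_cases hn : n = 0
      · subst hn
        simpa using hj
      · have hn1 : 1 ≤ n := by omega
        have hprev := ih hn1 (by omega)
        have hnext := starve n hn1 (by omega) hprev
        simpa using hnext
  have keynext : ∀ i, 1 ≤ i → i + 1 ≤ r → s(u i, u (i + 1)) ∈ τ.edges :=
    fun i h1 h2 => starve i h1 h2 (key i h1 (by omega))
  -- the last edge (u r, w)
  have hlast : s(u r, w) ∈ τ.edges := by
    have hprev := key r (by omega) le_rfl
    have hprev' : s(u r, u (r - 1)) ∈ τ.edges := by rwa [Sym2.eq_swap] at hprev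
    obtain ⟨z, hzne, hz⟩ := second (u r) (u (r - 1)) hprev'
    have hcand := adj_u r (by omega) le_rfl z (adjE _ _ hz)
    rcases hcand with hzw | ⟨h', -⟩ | ⟨-, rfl⟩ | ⟨h', -⟩ | ⟨-, rfl⟩
    · rwa [hzw] at hz
    · omega
    · exact absurd rfl hzne
    · omega
    · exfalso
      obtain ⟨z', hz'ne, hz'⟩ := second w x hkw
      rcases adj_w z' (adjE _ _ hz') with rfl | ⟨m, hm1, hm2, rfl⟩
      · exact hz'ne rfl
      · have hwm : s(u m, w) ∈ τ.edges := by rwa [Sym2.eq_swap] at hz'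
        have e1 : s(u m, u (m - 1)) ∈ τ.edges := by
          have := key m hm1 hm2; rwa [Sym2.eq_swap] at this
        have e2 : s(u m, u (m + 1)) ∈ τ.edges := by
          rcases Nat.lt_or_ge m r with h | h
          · exact keynext m hm1 (by omega)
          · have hmr : m = r := by omega
            subst hmr
            exact hz
        refine atmost (u m) w (u (m - 1)) (u (m + 1)) hwm e1 e2
          ((hnw (m - 1) (by omega)).symm) ((hnw (m + 1) (by omega)).symm) ?_
        rcases Nat.lt_or_ge m r with h | h
        · exact (hne' (m + 1) (m - 1) (by omega) (by omega) (by omega) (by omega)).symm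
        · exact hne' (m - 1) (m + 1) (by omega) (by omega) (by omega) (by omega)
  -- a spoke in the cycle must be the last one
  have hspoke : ∀ m, 1 ≤ m → m ≤ r → s(w, u m) ∈ τ.edges → m = r := by
    intro m h1 h2 hsp
    by_contra hmr
    have hm1 : m + 1 ≤ r := by omega
    have e1 : s(u m, u (m - 1)) ∈ τ.edges := by
      have := key m h1 h2; rwa [Sym2.eq_swap] at this
    have e2 := keynext m h1 hm1
    have e3 : s(u m, w) ∈ τ.edges := by rwa [Sym2.eq_swap] at hsp
    exact atmost (u m) (u (m - 1)) (u (m + 1)) w e1 e2 e3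
      ((hne' (m + 1) (m - 1) (by omega) (by omega) (by omega) (by omega)).symm)
      (hnw (m - 1) (by omega)) (hnw (m + 1) (by omega))
  -- conclusion
  intro e
  induction e using Sym2.inductionOn with
  | _ a b =>
    constructor
    · rintro ⟨heE, hend⟩
      have haF : a ∈ F := hend a (by simp)
      have hbF : b ∈ F := hend b (by simp)
      have hadj : G.Adj a b := adjE a b heE
      rw [hin a haF b hbF] at hadj
      rcases hadj with ⟨m, hm, hc⟩ | ⟨m, hm, hc⟩
      · rw [Set.mem_Icc] at hm
        left
        rcases hc with ⟨rfl, rfl⟩ | ⟨rfl, rfl⟩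
        · have hmr : m = r := hspoke m hm.1 hm.2 heE
          subst hmr
          exact Sym2.eq_swap
        · have hmr : m = r := hspoke m hm.1 hm.2 (by rwa [Sym2.eq_swap] at heE)
          subst hmr
          rfl
      · right
        refine ⟨m, hm, ?_⟩
        rcases hc with ⟨rfl, rfl⟩ | ⟨rfl, rfl⟩
        · rfl
        · exact Sym2.eq_swap
    · rintro (he | ⟨m, hm, he⟩)
      · rw [he]
        refine ⟨hlast, ?_⟩
        intro z hz
        rw [Sym2.mem_iff] at hz
        rcases hz with rfl | rfl
        · exact uF r (by omega) le_rfl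
        · exact wF
      · rw [Set.mem_Icc] at hm
        rw [he]
        refine ⟨keynext m hm.1 (by omega), ?_⟩
        intro z hz
        rw [Sym2.mem_iff] at hz
        rcases hz with rfl | rfl
        · exact uF m hm.1 (by omega)
        · exact uF (m + 1) (by omega) (by omega)
end

section
/- Let G be a finite simple graph containing a fan F on distinct vertices w, u_1, …, u_r (r ≥ 2) with cutset edges j = (u_0, u_1), k = (x, w), l = (u_r, u_{r+1}). Then for every Hamiltonian cycle τ of G that contains both j and l, there exists an index i with 1 ≤ i ≤ r−1 such that the edges of τ with both endpoints in {w, u_1, …, u_r} are exactly the rim edges (u_1, u_2), …, (u_{r−1}, u_r) with (u_i, u_{i+1}) removed, together with the two spokes (u_i, w) and (w, u_{i+1}); that is, τ traverses F by a subsequence of the form u_1, …, u_i, w, u_{i+1}, …, u_r (a centre-traversal). -/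
open SimpleGraph Walk

private lemma path_start_nbr {V : Type*} {G : SimpleGraph V} {a b y : V} {p : G.Walk a b}
    (hp : p.IsPath) (h : p.toSubgraph.Adj a y) : y = p.getVert 1 := by
  cases p with
  | nil => simp [Walk.toSubgraph, singletonSubgraph_adj] at h
  | cons hadj q =>
    rcases (Subgraph.sup_adj).mp h with h' | h'
    · rw [subgraphOfAdj_adj, Sym2.congr_right] at h'
      simp [h', Walk.getVert_cons_succ, Walk.getVert_zero]
    · exfalso
      have := (Walk.mem_verts_toSubgraph q).mp h'.fst_mem
      exact ((Walk.cons_isPath_iff _ _).mp hp).2 this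

private lemma cycle_two_nbrs_start {V : Type*} {G : SimpleGraph V} {v : V}
    {c : G.Walk v v} (hc : c.IsCycle) :
    ∃ a b : V, a ≠ b ∧ ∀ y : V, c.toSubgraph.Adj v y ↔ y = a ∨ y = b := by
  have hlen := hc.three_le_length
  cases c with
  | nil => simp at hlen
  | cons hadj q =>
    rename_i b₀
    obtain ⟨hqpath, hqe⟩ := (Walk.cons_isCycle_iff _ _).mp hc
    have hqlen : 2 ≤ q.length := by simpa using hlen
    have hq1 : q.length - 1 < q.length := by omega
    have hq2 : q.length - 1 + 1 = q.length := by omega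
    have hpen : q.toSubgraph.Adj (q.getVert (q.length - 1)) v := by
      have := Walk.toSubgraph_adj_getVert q hq1
      rwa [hq2, Walk.getVert_length] at this
    refine ⟨b₀, q.getVert (q.length - 1), ?_, ?_⟩
    · intro hbe
      apply hqe
      rw [← Walk.mem_edges_toSubgraph, Subgraph.mem_edgeSet]
      rw [← hbe] at hpen
      exact hpen.symm
    · intro y
      constructor
      · intro h
        rcases (Subgraph.sup_adj).mp h with h' | h'
        · rw [subgraphOfAdj_adj, Sym2.congr_right] at h'
          exact Or.inl h'.symm
        · right
          have hrev : q.reverse.toSubgraph.Adj v y := by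
            rwa [Walk.toSubgraph_reverse]
          have := path_start_nbr hqpath.reverse hrev
          rwa [Walk.getVert_reverse] at this
      · rintro (rfl | rfl)
        · exact Or.inl (by rw [subgraphOfAdj_adj])
        · exact Or.inr hpen.symm

private lemma cycle_two_nbrs {V : Type*} [DecidableEq V] {G : SimpleGraph V} {v₀ : V}
    {c : G.Walk v₀ v₀} (hc : c.IsCycle) {v : V} (hv : v ∈ c.support) :
    ∃ a b : V, a ≠ b ∧ ∀ y : V, s(v, y) ∈ c.edges ↔ y = a ∨ y = b := by
  obtain ⟨a, b, hab, h⟩ := cycle_two_nbrs_start (hc.rotate hv)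
  refine ⟨a, b, hab, fun y => ?_⟩
  rw [← c.mem_edges_toSubgraph, Subgraph.mem_edgeSet, ← Walk.toSubgraph_rotate c hv]
  exact h y


/-- Centre-traversal of a fan.  Let `G` contain a fan on distinct vertices
`w, u 1, …, u r` (`r ≥ 2`): the edges of `G` inside `F = {w, u 1, …, u r}` are
exactly the spokes `(w, u i)` (`1 ≤ i ≤ r`) and the rim edges `(u i, u (i+1))`
(`1 ≤ i ≤ r-1`), and the only edges leaving `F` are `j = (u 0, u 1)`, `k = (x, w)`
and `l = (u r, u (r+1))` with `u 0, x, u (r+1) ∉ F`.  Then for every Hamiltonian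
cycle `τ` containing `j` and `l`, there is an index `1 ≤ i ≤ r-1` such that the
edges of `τ` with both endpoints in `F` are exactly the rim edges other than
`(u i, u (i+1))`, together with the two spokes `(u i, w)` and `(w, u (i+1))`. -/
theorem stmt_9 {V : Type*} [Fintype V] [DecidableEq V] (G : SimpleGraph V)
    (r : ℕ) (hr : 2 ≤ r) (w x : V) (u : ℕ → V) (F : Set V)
    (hF : F = insert w (u '' Set.Icc 1 r))
    (hinj : ∀ i ∈ Set.Icc 1 r, ∀ j ∈ Set.Icc 1 r, u i = u j → i = j)
    (hwu : ∀ i ∈ Set.Icc 1 r, u i ≠ w)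
    (hu0 : u 0 ∉ F) (hx : x ∉ F) (hur1 : u (r + 1) ∉ F)
    (hin : ∀ a ∈ F, ∀ b ∈ F, (G.Adj a b ↔
      (∃ i ∈ Set.Icc 1 r, (a = w ∧ b = u i) ∨ (a = u i ∧ b = w)) ∨
      (∃ i ∈ Set.Icc 1 (r - 1), (a = u i ∧ b = u (i + 1)) ∨ (a = u (i + 1) ∧ b = u i))))
    (hout : ∀ a ∈ F, ∀ b ∉ F, (G.Adj a b ↔
      (a = u 1 ∧ b = u 0) ∨ (a = w ∧ b = x) ∨ (a = u r ∧ b = u (r + 1))))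
    {v₀ : V} (τ : G.Walk v₀ v₀) (hτ : τ.IsHamiltonianCycle)
    (hj : s(u 0, u 1) ∈ τ.edges) (hl : s(u r, u (r + 1)) ∈ τ.edges) :
    ∃ i ∈ Set.Icc 1 (r - 1), ∀ e : Sym2 V, (e ∈ τ.edges ∧ ∀ z ∈ e, z ∈ F) ↔
      (e = s(u i, w) ∨ e = s(w, u (i + 1)) ∨
        ∃ p ∈ Set.Icc 1 (r - 1), p ≠ i ∧ e = s(u p, u (p + 1))) := by
  classical
  have hwF : w ∈ F := by rw [hF]; exact Set.mem_insert _ _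
  have huF : ∀ p ∈ Set.Icc 1 r, u p ∈ F := by
    intro p hp; rw [hF]; exact Set.mem_insert_iff.mpr (Or.inr ⟨p, hp, rfl⟩)
  -- G-neighbourhood of w
  have hGw : ∀ y, G.Adj w y → y = x ∨ ∃ m ∈ Set.Icc 1 r, y = u m := by
    intro y hadj
    by_cases hy : y ∈ F
    · rcases (hin w hwF y hy).mp hadj with ⟨m, hm, h⟩ | ⟨m, hm, h⟩
      · rcases h with ⟨_, rfl⟩ | ⟨h1, _⟩
        · exact Or.inr ⟨m, hm, rfl⟩
        · exact absurd h1.symm (hwu m hm)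
      · have hm' := Set.mem_Icc.mp hm
        rcases h with ⟨h1, _⟩ | ⟨h1, _⟩
        · exact absurd h1.symm (hwu m (Set.mem_Icc.mpr ⟨by omega, by omega⟩))
        · exact absurd h1.symm (hwu (m+1) (Set.mem_Icc.mpr ⟨by omega, by omega⟩))
    · rcases (hout w hwF y hy).mp hadj with ⟨h1, _⟩ | ⟨_, rfl⟩ | ⟨h1, _⟩
      · exact absurd h1.symm (hwu 1 (Set.mem_Icc.mpr ⟨le_refl 1, by omega⟩))
      · exact Or.inl rfl
      · exact absurd h1.symm (hwu r (Set.mem_Icc.mpr ⟨by omega, le_refl r⟩))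
  -- G-neighbourhood of u p
  have hGu : ∀ p ∈ Set.Icc 1 r, ∀ y, G.Adj (u p) y → y = w ∨ y = u (p-1) ∨ y = u (p+1) := by
    intro p hp y hadj
    have hp' := Set.mem_Icc.mp hp
    by_cases hy : y ∈ F
    · rcases (hin (u p) (huF p hp) y hy).mp hadj with ⟨m, hm, h⟩ | ⟨m, hm, h⟩
      · rcases h with ⟨h1, _⟩ | ⟨_, rfl⟩
        · exact absurd h1 (hwu p hp)
        · exact Or.inl rfl
      · have hm' := Set.mem_Icc.mp hm
        have hmr : m ∈ Set.Icc 1 r := Set.mem_Icc.mpr ⟨by omega, by omega⟩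
        have hm1r : m + 1 ∈ Set.Icc 1 r := Set.mem_Icc.mpr ⟨by omega, by omega⟩
        rcases h with ⟨h1, rfl⟩ | ⟨h1, rfl⟩
        · exact Or.inr (Or.inr (by rw [hinj p hp m hmr h1]))
        · have hpm := hinj p hp (m+1) hm1r h1
          exact Or.inr (Or.inl (by rw [show p - 1 = m by omega]))
    · rcases (hout (u p) (huF p hp) y hy).mp hadj with ⟨h1, rfl⟩ | ⟨h1, _⟩ | ⟨h1, rfl⟩
      · have hp1 := hinj p hp 1 (Set.mem_Icc.mpr ⟨le_refl 1, by omega⟩) h1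
        exact Or.inr (Or.inl (by rw [show p - 1 = 0 by omega]))
      · exact absurd h1 (hwu p hp)
      · have hpr := hinj p hp r (Set.mem_Icc.mpr ⟨by omega, le_refl r⟩) h1
        exact Or.inr (Or.inr (by rw [hpr]))
  -- distinctness
  have hne1 : ∀ p ∈ Set.Icc 1 r, u (p-1) ≠ w := by
    intro p hp
    have hp' := Set.mem_Icc.mp hp
    by_cases h1 : p = 1
    · subst h1
      intro h
      have h' : u 0 = w := h
      exact hu0 (by rw [h']; exact hwF)
    · exact hwu (p-1) (Set.mem_Icc.mpr ⟨by omega, by omega⟩)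
  have hne2 : ∀ p ∈ Set.Icc 1 r, u (p+1) ≠ w := by
    intro p hp
    have hp' := Set.mem_Icc.mp hp
    by_cases h1 : p = r
    · subst h1
      intro h
      exact hur1 (by rw [h]; exact hwF)
    · exact hwu (p+1) (Set.mem_Icc.mpr ⟨by omega, by omega⟩)
  have hne3 : ∀ p ∈ Set.Icc 1 r, u (p-1) ≠ u (p+1) := by
    intro p hp h
    have hp' := Set.mem_Icc.mp hp
    by_cases h1 : p = 1
    · subst h1
      have h' : u 0 = u 2 := h
      exact hu0 (by rw [h']; exact huF 2 (Set.mem_Icc.mpr ⟨by omega, by omega⟩))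
    · by_cases h2 : p = r
      · have h' : u (r-1) = u (r+1) := by
          rw [show r-1 = p-1 by omega, show r+1 = p+1 by omega]; exact h
        exact hur1 (by rw [← h']; exact huF (r-1) (Set.mem_Icc.mpr ⟨by omega, by omega⟩))
      · have := hinj (p-1) (Set.mem_Icc.mpr ⟨by omega, by omega⟩)
          (p+1) (Set.mem_Icc.mpr ⟨by omega, by omega⟩) h
        omega
  -- the two τ-neighbours of each u p
  have hC : ∀ p ∈ Set.Icc 1 r,
      (s(u p, w) ∉ τ.edges → s(u (p-1), u p) ∈ τ.edges ∧ s(u p, u (p+1)) ∈ τ.edges) ∧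
      (s(u p, w) ∈ τ.edges → ¬(s(u (p-1), u p) ∈ τ.edges ∧ s(u p, u (p+1)) ∈ τ.edges)) := by
    intro p hp
    obtain ⟨a, b, hab, hiff⟩ := cycle_two_nbrs hτ.isCycle (hτ.mem_support (u p))
    have hmem : ∀ y, s(u p, y) ∈ τ.edges → y = w ∨ y = u (p-1) ∨ y = u (p+1) :=
      fun y hy => hGu p hp y (τ.adj_of_mem_edges hy)
    have ha := hmem a ((hiff a).mpr (Or.inl rfl))
    have hb := hmem b ((hiff b).mpr (Or.inr rfl))
    have e1 : s(u (p-1), u p) ∈ τ.edges ↔ (u (p-1) = a ∨ u (p-1) = b) := by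
      rw [Sym2.eq_swap]; exact hiff (u (p-1))
    have e2 : s(u p, u (p+1)) ∈ τ.edges ↔ (u (p+1) = a ∨ u (p+1) = b) := hiff (u (p+1))
    have e0 : s(u p, w) ∈ τ.edges ↔ (w = a ∨ w = b) := hiff w
    have d1 := hne1 p hp
    have d2 := hne2 p hp
    have d3 := hne3 p hp
    constructor
    · intro hQ
      rw [e0] at hQ
      push_neg at hQ
      rw [e1, e2]
      have ha2 : a = u (p-1) ∨ a = u (p+1) := by
        rcases ha with h | h | h
        · exact absurd h.symm hQ.1
        · exact Or.inl h
        · exact Or.inr h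
      have hb2 : b = u (p-1) ∨ b = u (p+1) := by
        rcases hb with h | h | h
        · exact absurd h.symm hQ.2
        · exact Or.inl h
        · exact Or.inr h
      rcases ha2 with h1 | h1 <;> rcases hb2 with h2 | h2
      · exact absurd (h1.trans h2.symm) hab
      · exact ⟨Or.inl h1.symm, Or.inr h2.symm⟩
      · exact ⟨Or.inr h2.symm, Or.inl h1.symm⟩
      · exact absurd (h1.trans h2.symm) hab
    · intro hQ hPP
      obtain ⟨hP1, hP2⟩ := hPP
      rw [e0] at hQ
      rw [e1] at hP1
      rw [e2] at hP2
      rcases hQ with hq | hq <;> rcases hP1 with h | h <;> rcases hP2 with h' | h' <;>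
        first
          | exact d1 (h.trans hq.symm)
          | exact d2 (h'.trans hq.symm)
          | exact d3 (h.trans h'.symm)
  -- neighbours of w in τ
  obtain ⟨α, β, hαβ, hWiff⟩ := cycle_two_nbrs hτ.isCycle (hτ.mem_support w)
  have hαG := hGw α (τ.adj_of_mem_edges ((hWiff α).mpr (Or.inl rfl)))
  have hβG := hGw β (τ.adj_of_mem_edges ((hWiff β).mpr (Or.inr rfl)))
  have hxnot : ∀ m ∈ Set.Icc 1 r, u m ≠ x := by
    intro m hm h
    exact hx (by rw [← h]; exact huF m hm)
  -- contradiction if w has only one spoke in τ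
  have hcontra : ∀ n ∈ Set.Icc 1 r,
      (∀ p ∈ Set.Icc 1 r, (s(u p, w) ∈ τ.edges ↔ p = n)) → False := by
    intro n hn hQ
    have hn' := Set.mem_Icc.mp hn
    have hPn1 : s(u (n-1), u n) ∈ τ.edges := by
      by_cases h1 : n = 1
      · subst h1; exact hj
      · have hm1 : n - 1 ∈ Set.Icc 1 r := Set.mem_Icc.mpr ⟨by omega, by omega⟩
        have hQ' : s(u (n-1), w) ∉ τ.edges := by rw [hQ (n-1) hm1]; omega
        have := ((hC (n-1) hm1).1 hQ').2
        rwa [show n - 1 + 1 = n by omega] at this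
    have hPn2 : s(u n, u (n+1)) ∈ τ.edges := by
      by_cases h1 : n = r
      · subst h1; exact hl
      · have hm1 : n + 1 ∈ Set.Icc 1 r := Set.mem_Icc.mpr ⟨by omega, by omega⟩
        have hQ' : s(u (n+1), w) ∉ τ.edges := by rw [hQ (n+1) hm1]; omega
        have := ((hC (n+1) hm1).1 hQ').1
        rwa [show n + 1 - 1 = n by omega] at this
    exact (hC n hn).2 ((hQ n hn).mpr rfl) ⟨hPn1, hPn2⟩
  -- main construction
  have hQmain : ∀ a b : ℕ, a ∈ Set.Icc 1 r → b ∈ Set.Icc 1 r → a < b →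
      (∀ p ∈ Set.Icc 1 r, (s(u p, w) ∈ τ.edges ↔ p = a ∨ p = b)) →
      (∃ i ∈ Set.Icc 1 (r - 1), ∀ e : Sym2 V, (e ∈ τ.edges ∧ ∀ z ∈ e, z ∈ F) ↔
        (e = s(u i, w) ∨ e = s(w, u (i + 1)) ∨
          ∃ p ∈ Set.Icc 1 (r - 1), p ≠ i ∧ e = s(u p, u (p + 1)))) := by
    intro a b ha hb hlt hQ
    have ha' := Set.mem_Icc.mp ha
    have hb' := Set.mem_Icc.mp hb
    have hPa1 : s(u (a-1), u a) ∈ τ.edges := by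
      by_cases h1 : a = 1
      · subst h1; exact hj
      · have hm : a - 1 ∈ Set.Icc 1 r := Set.mem_Icc.mpr ⟨by omega, by omega⟩
        have hQ' : s(u (a-1), w) ∉ τ.edges := by rw [hQ (a-1) hm]; omega
        have := ((hC (a-1) hm).1 hQ').2
        rwa [show a - 1 + 1 = a by omega] at this
    have hb1 : b = a + 1 := by
      by_contra hne
      have hlt2 : a + 1 < b := by omega
      have hm : a + 1 ∈ Set.Icc 1 r := Set.mem_Icc.mpr ⟨by omega, by omega⟩
      have hQ' : s(u (a+1), w) ∉ τ.edges := by rw [hQ (a+1) hm]; omega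
      have hPa : s(u a, u (a+1)) ∈ τ.edges := by
        have := ((hC (a+1) hm).1 hQ').1
        rwa [show a + 1 - 1 = a by omega] at this
      exact (hC a ha).2 ((hQ a ha).mpr (Or.inl rfl)) ⟨hPa1, hPa⟩
    subst hb1
    have hQa : s(u a, w) ∈ τ.edges := (hQ a ha).mpr (Or.inl rfl)
    have hQa1 : s(u (a+1), w) ∈ τ.edges := (hQ (a+1) hb).mpr (Or.inr rfl)
    have hPnot : s(u a, u (a+1)) ∉ τ.edges := fun hP => (hC a ha).2 hQa ⟨hPa1, hP⟩
    have hPp : ∀ p ∈ Set.Icc 1 (r-1), p ≠ a → s(u p, u (p+1)) ∈ τ.edges := by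
      intro p hp hpa
      have hp' := Set.mem_Icc.mp hp
      by_cases hpb : p = a + 1
      · subst hpb
        have hm : a + 2 ∈ Set.Icc 1 r := Set.mem_Icc.mpr ⟨by omega, by omega⟩
        have hQ' : s(u (a+2), w) ∉ τ.edges := by rw [hQ (a+2) hm]; omega
        have := ((hC (a+2) hm).1 hQ').1
        rwa [show a + 2 - 1 = a + 1 by omega] at this
      · have hm : p ∈ Set.Icc 1 r := Set.mem_Icc.mpr ⟨by omega, by omega⟩
        have hQ' : s(u p, w) ∉ τ.edges := by rw [hQ p hm]; omega
        exact ((hC p hm).1 hQ').2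
    refine ⟨a, Set.mem_Icc.mpr ⟨by omega, by omega⟩, fun e => ?_⟩
    constructor
    · rintro ⟨heτ, heF⟩
      induction e using Sym2.ind with
      | _ y z =>
        have hy : y ∈ F := heF y (Sym2.mem_mk_left y z)
        have hz : z ∈ F := heF z (Sym2.mem_mk_right y z)
        have hadj : G.Adj y z := τ.adj_of_mem_edges heτ
        rcases (hin y hy z hz).mp hadj with ⟨m, hm, h⟩ | ⟨m, hm, h⟩
        · have hQm : m = a ∨ m = a + 1 := by
            apply (hQ m hm).mp
            rcases h with ⟨rfl, rfl⟩ | ⟨rfl, rfl⟩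
            · rwa [Sym2.eq_swap] at heτ
            · exact heτ
          rcases h with ⟨rfl, rfl⟩ | ⟨rfl, rfl⟩
          · rcases hQm with rfl | rfl
            · exact Or.inl Sym2.eq_swap
            · exact Or.inr (Or.inl rfl)
          · rcases hQm with rfl | rfl
            · exact Or.inl rfl
            · exact Or.inr (Or.inl Sym2.eq_swap)
        · have hPm : s(u m, u (m+1)) ∈ τ.edges := by
            rcases h with ⟨rfl, rfl⟩ | ⟨rfl, rfl⟩
            · exact heτ
            · rwa [Sym2.eq_swap] at heτ
          have hma : m ≠ a := by
            intro hma
            rw [hma] at hPm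
            exact hPnot hPm
          rcases h with ⟨rfl, rfl⟩ | ⟨rfl, rfl⟩
          · exact Or.inr (Or.inr ⟨m, hm, hma, rfl⟩)
          · exact Or.inr (Or.inr ⟨m, hm, hma, Sym2.eq_swap⟩)
    · rintro (rfl | rfl | ⟨p, hp, hpa, rfl⟩)
      · refine ⟨hQa, fun z hzmem => ?_⟩
        rcases Sym2.mem_iff.mp hzmem with rfl | rfl
        · exact huF a ha
        · exact hwF
      · refine ⟨by rwa [Sym2.eq_swap], fun z hzmem => ?_⟩
        rcases Sym2.mem_iff.mp hzmem with rfl | rfl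
        · exact hwF
        · exact huF (a+1) hb
      · refine ⟨hPp p hp hpa, fun z hzmem => ?_⟩
        have hp' := Set.mem_Icc.mp hp
        rcases Sym2.mem_iff.mp hzmem with rfl | rfl
        · exact huF p (Set.mem_Icc.mpr ⟨by omega, by omega⟩)
        · exact huF (p+1) (Set.mem_Icc.mpr ⟨by omega, by omega⟩)
  -- case analysis on the neighbours of w
  rcases hαG with rfl | ⟨m, hm, rfl⟩
  · rcases hβG with rfl | ⟨n, hn, rfl⟩
    · exact absurd rfl hαβ
    · exfalso
      apply hcontra n hn
      intro p hp
      rw [Sym2.eq_swap, hWiff (u p)]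
      constructor
      · rintro (h | h)
        · exact absurd h (hxnot p hp)
        · exact hinj p hp n hn h
      · rintro rfl
        exact Or.inr rfl
  · rcases hβG with rfl | ⟨n, hn, rfl⟩
    · exfalso
      apply hcontra m hm
      intro p hp
      rw [Sym2.eq_swap, hWiff (u p)]
      constructor
      · rintro (h | h)
        · exact hinj p hp m hm h
        · exact absurd h (hxnot p hp)
      · rintro rfl
        exact Or.inl rfl
    · have hmn : m ≠ n := fun h => hαβ (by rw [h])
      have hQ : ∀ p ∈ Set.Icc 1 r, (s(u p, w) ∈ τ.edges ↔ p = m ∨ p = n) := by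
        intro p hp
        rw [Sym2.eq_swap, hWiff (u p)]
        constructor
        · rintro (h | h)
          · exact Or.inl (hinj p hp m hm h)
          · exact Or.inr (hinj p hp n hn h)
        · rintro (rfl | rfl)
          · exact Or.inl rfl
          · exact Or.inr rfl
      rcases lt_or_gt_of_ne hmn with h | h
      · exact hQmain m n hm hn h hQ
      · exact hQmain n m hn hm h (fun p hp => (hQ p hp).trans or_comm)
end

section
/- Let D be the 4-fan gadget: the simple graph on the seven vertices ℓ, u_1, u_2, u_3, u_4, r, v whose edges are the path edges (ℓ, u_1), (u_1, u_2), (u_2, u_3), (u_3, u_4), (u_4, r) and the spokes (v, u_i) for 1 ≤ i ≤ 4. Then the Hamiltonian paths of D from ℓ to r are exactly the three paths ℓ, u_1, …, u_i, v, u_{i+1}, …, u_4, r for i ∈ {1, 2, 3}. In particular, every Hamiltonian ℓ–r path of D contains all of the path edges except exactly one of (u_1, u_2), (u_2, u_3), (u_3, u_4), which it skips to detour through v. -/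
/-- The 4-fan gadget on seven vertices, labelled as elements of `Fin 7`:
`ℓ = 0`, `u₁ = 1`, `u₂ = 2`, `u₃ = 3`, `u₄ = 4`, `r = 5`, `v = 6`.
Its edges are the path edges `(ℓ,u₁), (u₁,u₂), (u₂,u₃), (u₃,u₄), (u₄,r)`
and the spokes `(v,uᵢ)` for `1 ≤ i ≤ 4`. -/
def fourFanGadget : SimpleGraph (Fin 7) :=
  SimpleGraph.fromRel (fun a b =>
    (a, b) ∈ ([(0, 1), (1, 2), (2, 3), (3, 4), (4, 5),
               (6, 1), (6, 2), (6, 3), (6, 4)] : List (Fin 7 × Fin 7)))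

instance : DecidableRel fourFanGadget.Adj := fun a b =>
  decidable_of_iff _ (SimpleGraph.fromRel_adj _ a b).symm

lemma fourFan_key : ∀ a b c d e : Fin 7,
    ([(0 : Fin 7), a, b, c, d, e, 5] : List (Fin 7)).Nodup →
    fourFanGadget.Adj 0 a → fourFanGadget.Adj a b → fourFanGadget.Adj b c →
    fourFanGadget.Adj c d → fourFanGadget.Adj d e → fourFanGadget.Adj e 5 →
    ([(0 : Fin 7), a, b, c, d, e, 5] = [0, 1, 6, 2, 3, 4, 5] ∨
      [(0 : Fin 7), a, b, c, d, e, 5] = [0, 1, 2, 6, 3, 4, 5] ∨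
      [(0 : Fin 7), a, b, c, d, e, 5] = [0, 1, 2, 3, 6, 4, 5]) := by decide

lemma list_len7 {α : Type*} (l : List α) (h : l.length = 7) :
    ∃ a b c d e f g, l = [a, b, c, d, e, f, g] := by
  rcases l with _ | ⟨a, _ | ⟨b, _ | ⟨c, _ | ⟨d, _ | ⟨e, _ | ⟨f, _ | ⟨g, _ | ⟨h', t⟩⟩⟩⟩⟩⟩⟩⟩ <;>
    simp_all

/-- the three explicit Hamiltonian walks -/
def fanWalk1 : fourFanGadget.Walk 0 5 :=
  .cons (show fourFanGadget.Adj 0 1 by decide) (.cons (show fourFanGadget.Adj 1 6 by decide)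
    (.cons (show fourFanGadget.Adj 6 2 by decide) (.cons (show fourFanGadget.Adj 2 3 by decide)
      (.cons (show fourFanGadget.Adj 3 4 by decide)
        (.cons (show fourFanGadget.Adj 4 5 by decide) .nil)))))

def fanWalk2 : fourFanGadget.Walk 0 5 :=
  .cons (show fourFanGadget.Adj 0 1 by decide) (.cons (show fourFanGadget.Adj 1 2 by decide)
    (.cons (show fourFanGadget.Adj 2 6 by decide) (.cons (show fourFanGadget.Adj 6 3 by decide)
      (.cons (show fourFanGadget.Adj 3 4 by decide)
        (.cons (show fourFanGadget.Adj 4 5 by decide) .nil)))))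

def fanWalk3 : fourFanGadget.Walk 0 5 :=
  .cons (show fourFanGadget.Adj 0 1 by decide) (.cons (show fourFanGadget.Adj 1 2 by decide)
    (.cons (show fourFanGadget.Adj 2 3 by decide) (.cons (show fourFanGadget.Adj 3 6 by decide)
      (.cons (show fourFanGadget.Adj 6 4 by decide)
        (.cons (show fourFanGadget.Adj 4 5 by decide) .nil)))))

/-- The Hamiltonian `ℓ`–`r` paths of the 4-fan gadget are exactly the three paths
`ℓ, u₁, …, u_i, v, u_{i+1}, …, u₄, r` for `i ∈ {1, 2, 3}`; each of the three does
occur.  In particular every Hamiltonian `ℓ`–`r` path skips exactly one of the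
middle outer edges `(u₁,u₂), (u₂,u₃), (u₃,u₄)` to detour through `v`. -/
theorem stmt_11 :
    (∀ P : fourFanGadget.Walk 0 5, (P.IsPath ∧ P.IsHamiltonian) ↔
      (P.support = [0, 1, 6, 2, 3, 4, 5] ∨ P.support = [0, 1, 2, 6, 3, 4, 5] ∨
        P.support = [0, 1, 2, 3, 6, 4, 5])) ∧
    (∀ l ∈ ([[0, 1, 6, 2, 3, 4, 5], [0, 1, 2, 6, 3, 4, 5],
        [0, 1, 2, 3, 6, 4, 5]] : List (List (Fin 7))),
      ∃ P : fourFanGadget.Walk 0 5, P.support = l) := by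
  constructor
  · intro P
    constructor
    · rintro ⟨hP, hH⟩
      have hlen : P.support.length = 7 := by
        rw [SimpleGraph.Walk.length_support, hH.length_eq]
        simp
      obtain ⟨a, b, c, d, e, f, g, hs⟩ := list_len7 _ hlen
      have h0 : a = 0 := by
        have := P.support_eq_cons
        rw [hs] at this
        exact (List.cons.injEq _ _ _ _).mp this |>.1
      have h5 : g = 5 := by
        have := P.getLast_support
        simp only [hs] at this
        simpa using this
      subst h0 h5
      have hnd : ([(0 : Fin 7), b, c, d, e, f, 5] : List (Fin 7)).Nodup := hs ▸ hP.support_nodup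
      have hch : List.Chain' fourFanGadget.Adj [0, b, c, d, e, f, 5] :=
        hs ▸ P.isChain_adj_support
      simp only [List.Chain', List.isChain_cons_cons, List.isChain_singleton, and_true] at hch
      rw [hs]
      exact fourFan_key b c d e f hnd hch.1 hch.2.1 hch.2.2.1 hch.2.2.2.1 hch.2.2.2.2.1
        hch.2.2.2.2.2
    · intro h
      have hP : P.IsPath := by
        rw [SimpleGraph.Walk.isPath_def]
        rcases h with h | h | h <;> rw [h] <;> decide
      refine ⟨hP, fun v => ?_⟩
      rcases h with h | h | h <;> rw [h] <;> fin_cases v <;> decide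
  · intro l hl
    fin_cases hl
    · exact ⟨fanWalk1, rfl⟩
    · exact ⟨fanWalk2, rfl⟩
    · exact ⟨fanWalk3, rfl⟩
end

section
/- Let G be a finite simple graph on n ≥ 5 vertices, let c assign a real cost to each edge of G, and let q assign a real cost to each pair of edges of G with q(e, f) = q(f, e). If a Hamiltonian cycle τ* of G minimizes the STSP(3) cost over all Hamiltonian cycles of G, then τ* also minimizes the TSP(3) cost over all Hamiltonian cycles of G. -/
open Finset

/-- A tour on `n` vertices is given by distinct vertices `v 0, …, v (n-1)` in cyclic
order; its `i`-th edge is `s(v i, v (i+1))` (indices mod `n`). -/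
def tourEdge {V : Type*} {n : ℕ} [NeZero n] (v : ZMod n → V) (i : ZMod n) : Sym2 V :=
  s(v i, v (i + 1))

/-- `v : ZMod n → V` represents a Hamiltonian cycle of `G` (when `Fintype.card V = n`):
the vertices `v 0, …, v (n-1)` are distinct (hence all of `V`) and consecutive
vertices are adjacent in `G`. -/
def IsHamCycleSeq {V : Type*} {n : ℕ} [NeZero n] (G : SimpleGraph V)
    (v : ZMod n → V) : Prop :=
  Function.Injective v ∧ ∀ i : ZMod n, G.Adj (v i) (v (i + 1))

/-- `δ(3,τ)`: the set of unordered pairs of tour edges that are 2-neighbours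
(consecutive) or 3-neighbours (two apart), each pair counted once. -/
noncomputable def delta3 {V : Type*} [DecidableEq V] {n : ℕ} [NeZero n]
    (v : ZMod n → V) : Finset (Sym2 (Sym2 V)) :=
  (univ.image fun i : ZMod n => s(tourEdge v i, tourEdge v (i + 1))) ∪
    (univ.image fun i : ZMod n => s(tourEdge v i, tourEdge v (i + 2)))

/-- The STSP(3) cost of a tour: the sum over consecutive edge triples
`(eᵢ, eᵢ₊₁, eᵢ₊₂)` of `q'(e,f,g) = q(e,g) + (q(e,f)+q(f,g))/2 + (c(e)+c(f)+c(g))/3`. -/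
noncomputable def stsp3Cost {V : Type*} {n : ℕ} [NeZero n]
    (c : Sym2 V → ℝ) (q : Sym2 V → Sym2 V → ℝ) (v : ZMod n → V) : ℝ :=
  ∑ i : ZMod n,
    (q (tourEdge v i) (tourEdge v (i + 2)) +
      (q (tourEdge v i) (tourEdge v (i + 1)) +
        q (tourEdge v (i + 1)) (tourEdge v (i + 2))) / 2 +
      (c (tourEdge v i) + c (tourEdge v (i + 1)) + c (tourEdge v (i + 2))) / 3)

/-- The TSP(3) cost of a tour: `Σ_{{e,f} ∈ δ(3,τ)} q(e,f) + Σ_{e ∈ τ} c(e)`. -/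
noncomputable def tsp3Cost {V : Type*} [DecidableEq V] {n : ℕ} [NeZero n]
    (c : Sym2 V → ℝ) (q : Sym2 V → Sym2 V → ℝ) (hq : ∀ a b, q a b = q b a)
    (v : ZMod n → V) : ℝ :=
  (∑ p ∈ delta3 v, Sym2.lift ⟨q, hq⟩ p) + ∑ i : ZMod n, c (tourEdge v i)

section Aux

variable {V : Type*} [DecidableEq V] {n : ℕ} [NeZero n]

lemma aux_cast_ne_zero (hn : 5 ≤ n) {k : ℕ} (hk : 0 < k) (hkn : k < n) :
    (k : ZMod n) ≠ 0 := by
  intro h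
  rw [ZMod.natCast_eq_zero_iff] at h
  exact absurd (Nat.le_of_dvd hk h) (not_le.mpr hkn)

lemma aux_tourEdge_injective (hn : 5 ≤ n) {v : ZMod n → V}
    (hv : Function.Injective v) : Function.Injective (tourEdge v) := by
  intro i j h
  rw [tourEdge, tourEdge, Sym2.eq_iff] at h
  rcases h with ⟨h1, _⟩ | ⟨h1, h2⟩
  · exact hv h1
  · exfalso
    have e1 : i = j + 1 := hv h1
    have e2 : i + 1 = j := hv h2
    have h2' : (2 : ZMod n) ≠ 0 := by
      have := aux_cast_ne_zero (k := 2) hn (by norm_num) (by omega)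
      simpa using this
    apply h2'
    linear_combination e2 - e1

lemma aux_sum_delta3 (hn : 5 ≤ n) {v : ZMod n → V} (hv : Function.Injective v)
    (q : Sym2 V → Sym2 V → ℝ) (hq : ∀ a b, q a b = q b a) :
    ∑ p ∈ delta3 v, Sym2.lift ⟨q, hq⟩ p =
      (∑ i : ZMod n, q (tourEdge v i) (tourEdge v (i + 1))) +
      ∑ i : ZMod n, q (tourEdge v i) (tourEdge v (i + 2)) := by
  have hE := aux_tourEdge_injective hn hv
  have h1' : (1 : ZMod n) ≠ 0 := by
    have := aux_cast_ne_zero (k := 1) hn (by norm_num) (by omega); simpa using this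
  have h2' : (2 : ZMod n) ≠ 0 := by
    have := aux_cast_ne_zero (k := 2) hn (by norm_num) (by omega); simpa using this
  have h3' : (3 : ZMod n) ≠ 0 := by
    have := aux_cast_ne_zero (k := 3) hn (by norm_num) (by omega); simpa using this
  have h4' : (4 : ZMod n) ≠ 0 := by
    have := aux_cast_ne_zero (k := 4) hn (by norm_num) (by omega); simpa using this
  have hdisj : Disjoint
      (univ.image fun i : ZMod n => s(tourEdge v i, tourEdge v (i + 1)))
      (univ.image fun i : ZMod n => s(tourEdge v i, tourEdge v (i + 2))) := by
    rw [Finset.disjoint_left]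
    intro p hp hp2
    simp only [Finset.mem_image, Finset.mem_univ, true_and] at hp hp2
    obtain ⟨i, hi⟩ := hp
    obtain ⟨j, hj⟩ := hp2
    rw [← hj, Sym2.eq_iff] at hi
    rcases hi with ⟨ha, hb⟩ | ⟨ha, hb⟩
    · have ea : i = j := hE ha
      have eb : i + 1 = j + 2 := hE hb
      exact h1' (by linear_combination ea - eb)
    · have ea : i = j + 2 := hE ha
      have eb : i + 1 = j := hE hb
      exact h3' (by linear_combination eb - ea)
  have hinj1 : ∀ i ∈ (univ : Finset (ZMod n)), ∀ j ∈ (univ : Finset (ZMod n)),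
      s(tourEdge v i, tourEdge v (i + 1)) = s(tourEdge v j, tourEdge v (j + 1)) →
        i = j := by
    intro i _ j _ h
    rw [Sym2.eq_iff] at h
    rcases h with ⟨ha, _⟩ | ⟨ha, hb⟩
    · exact hE ha
    · have ea : i = j + 1 := hE ha
      have eb : i + 1 = j := hE hb
      exact (h2' (by linear_combination eb - ea)).elim
  have hinj2 : ∀ i ∈ (univ : Finset (ZMod n)), ∀ j ∈ (univ : Finset (ZMod n)),
      s(tourEdge v i, tourEdge v (i + 2)) = s(tourEdge v j, tourEdge v (j + 2)) →
        i = j := by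
    intro i _ j _ h
    rw [Sym2.eq_iff] at h
    rcases h with ⟨ha, _⟩ | ⟨ha, hb⟩
    · exact hE ha
    · have ea : i = j + 2 := hE ha
      have eb : i + 2 = j := hE hb
      exact (h4' (by linear_combination eb - ea)).elim
  rw [delta3, Finset.sum_union hdisj, Finset.sum_image hinj1,
    Finset.sum_image hinj2]
  simp

lemma aux_stsp_eq_tsp (hn : 5 ≤ n) {v : ZMod n → V} (hv : Function.Injective v)
    (c : Sym2 V → ℝ) (q : Sym2 V → Sym2 V → ℝ) (hq : ∀ a b, q a b = q b a) :
    stsp3Cost c q v = tsp3Cost c q hq v := by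
  rw [tsp3Cost, aux_sum_delta3 hn hv q hq, stsp3Cost]
  have shift1 : ∀ F : ZMod n → ℝ, ∑ i : ZMod n, F (i + 1) = ∑ i : ZMod n, F i :=
    fun F => Fintype.sum_equiv (Equiv.addRight 1) _ _ (fun i => rfl)
  have shift2 : ∀ F : ZMod n → ℝ, ∑ i : ZMod n, F (i + 2) = ∑ i : ZMod n, F i :=
    fun F => Fintype.sum_equiv (Equiv.addRight 2) _ _ (fun i => rfl)
  have hB : ∑ i : ZMod n, q (tourEdge v (i + 1)) (tourEdge v (i + 2)) =
      ∑ i : ZMod n, q (tourEdge v i) (tourEdge v (i + 1)) := by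
    have := shift1 (fun i => q (tourEdge v i) (tourEdge v (i + 1)))
    rw [← this]
    refine Finset.sum_congr rfl fun i _ => ?_
    rw [show i + 2 = i + 1 + 1 from by ring]
  have hC1 : ∑ i : ZMod n, c (tourEdge v (i + 1)) =
      ∑ i : ZMod n, c (tourEdge v i) := shift1 (fun i => c (tourEdge v i))
  have hC2 : ∑ i : ZMod n, c (tourEdge v (i + 2)) =
      ∑ i : ZMod n, c (tourEdge v i) := shift2 (fun i => c (tourEdge v i))
  simp only [add_div, Finset.sum_add_distrib, ← Finset.sum_div]
  rw [hB, hC1, hC2]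
  ring

end Aux

/-- If a Hamiltonian cycle `τ*` of a graph `G` on `n ≥ 5` vertices minimizes the
STSP(3) cost over all Hamiltonian cycles of `G`, then it also minimizes the
TSP(3) cost over all Hamiltonian cycles of `G`. -/
theorem stmt_13 {V : Type*} [Fintype V] [DecidableEq V] (n : ℕ) [NeZero n]
    (hn : 5 ≤ n) (hcard : Fintype.card V = n) (G : SimpleGraph V)
    (c : Sym2 V → ℝ) (q : Sym2 V → Sym2 V → ℝ) (hq : ∀ a b, q a b = q b a)
    (vstar : ZMod n → V) (hstar : IsHamCycleSeq G vstar)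
    (hmin : ∀ v' : ZMod n → V, IsHamCycleSeq G v' →
      stsp3Cost c q vstar ≤ stsp3Cost c q v') :
    ∀ v' : ZMod n → V, IsHamCycleSeq G v' →
      tsp3Cost c q hq vstar ≤ tsp3Cost c q hq v' := by
  intro v' hv'
  rw [← aux_stsp_eq_tsp hn hstar.1 c q hq, ← aux_stsp_eq_tsp hn hv'.1 c q hq]
  exact hmin v' hv'
end
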